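/- For all integers k ≥ 1 and n ≥ 1, there exists a word w over an alphabet Σ of cardinality n such that |w| = C(k+n, k) − 1, sub_k(w) = Σ^{≤k} (every word of length at most k is a subword of w), and any two distinct prefixes w1, w2 of w satisfy sub_k(w1) ≠ sub_k(w2). -/

import Mathlib

/-- `subk k w` is the set of scattered subwords of `w` of length at most `k`. -/
def subk {α : Type*} (k : ℕ) (w : List α) : Set (List α) :=
  {u | u.length ≤ k ∧ u.Sublist w}

/-- Two words are `k`-equivalent if they have the same subwords of length at most `k`. -/
def kEquiv {α : Type*} (k : ℕ) (u v : List α) : Prop :=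
  subk k u = subk k v

/-- A language is `k`-piecewise testable (Simon's characterization):
`k`-equivalent words are equi-members. -/
def IsPT {α : Type*} (k : ℕ) (L : Language α) : Prop :=
  ∀ u v : List α, kEquiv k u v → (u ∈ L ↔ v ∈ L)

/-- A DFA is minimal if all states are reachable and pairwise distinguishable. -/
def IsMinimalDFA {α σ : Type*} (A : DFA α σ) : Prop :=
  (∀ q : σ, ∃ w : List α, A.eval w = q) ∧
  ∀ p q : σ,
    (∀ w : List α, (A.evalFrom p w ∈ A.accept ↔ A.evalFrom q w ∈ A.accept)) → p = q

/-- There is a simple path (pairwise distinct states) with `m` transitions in the DFA `A`. -/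
def DFAHasSimplePath {α σ : Type*} (A : DFA α σ) (m : ℕ) : Prop :=
  ∃ (qs : Fin (m + 1) → σ) (as : Fin m → α),
    Function.Injective qs ∧ ∀ i : Fin m, A.step (qs i.castSucc) (as i) = qs i.succ

/-- The depth of a DFA: the number of transitions on a longest simple path. -/
noncomputable def dfaDepth {α σ : Type*} (A : DFA α σ) : ℕ :=
  sSup {m | DFAHasSimplePath A m}

/-- There is a simple path (pairwise distinct states) with `m` transitions in the NFA `A`. -/
def NFAHasSimplePath {α σ : Type*} (A : NFA α σ) (m : ℕ) : Prop :=
  ∃ (qs : Fin (m + 1) → σ) (as : Fin m → α),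
    Function.Injective qs ∧ ∀ i : Fin m, qs i.succ ∈ A.step (qs i.castSucc) (as i)

/-- The depth of an NFA: the number of transitions on a longest simple path. -/
noncomputable def nfaDepth {α σ : Type*} (A : NFA α σ) : ℕ :=
  sSup {m | NFAHasSimplePath A m}

def W : ℕ → ℕ → List ℕ
  | 0, _ => []
  | _+1, 0 => []
  | k+1, n+1 => W (k+1) n ++ n :: W k (n+1)
termination_by k n => k + n

lemma W_mem_lt : ∀ k n x, x ∈ W k n → x < n
  | 0, _, x, h => by simp [W] at h
  | _+1, 0, x, h => by simp [W] at h
  | k+1, n+1, x, h => by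
    rw [W] at h
    simp only [List.mem_append, List.mem_cons] at h
    rcases h with h | h | h
    · exact (W_mem_lt _ _ _ h).trans (Nat.lt_succ_self n)
    · omega
    · exact W_mem_lt _ _ _ h
termination_by k n => k + n

lemma W_length : ∀ k n, (W k n).length = (k+n).choose k - 1
  | 0, n => by simp [W]
  | k+1, 0 => by simp [W]
  | k+1, n+1 => by
    rw [W]
    simp only [List.length_append, List.length_cons, W_length (k+1) n, W_length k (n+1)]
    have h1 : 1 ≤ (k+1+n).choose (k+1) := Nat.choose_pos (by omega)
    have h2 : 1 ≤ (k+(n+1)).choose k := Nat.choose_pos (by omega)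
    have hp : (k+1+(n+1)).choose (k+1) = (k+1+n).choose k + (k+1+n).choose (k+1) := by
      have h : k+1+(n+1) = (k+1+n)+1 := by omega
      rw [h, Nat.choose_succ_succ']
    have : k + (n+1) = k + 1 + n := by omega
    rw [this] at h2 ⊢
    omega
termination_by k n => k + n

lemma split_first {u : List ℕ} {n : ℕ} (h : n ∈ u) :
    ∃ s t, u = s ++ n :: t ∧ n ∉ s := by
  induction u with
  | nil => simp at h
  | cons a u ih =>
    by_cases ha : a = n
    · exact ⟨[], u, by simp [ha], by simp⟩
    · rcases ih (by simp at h; tauto) with ⟨s, t, rfl, hs⟩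
      exact ⟨a :: s, t, by simp, by simp [hs, Ne.symm ha]⟩

lemma W_univ : ∀ k n (u : List ℕ), (∀ x ∈ u, x < n) → u.length ≤ k → u.Sublist (W k n)
  | 0, _, u, _, hlen => by
    rw [List.length_eq_zero_iff.mp (Nat.le_zero.mp hlen)]
    simp
  | k+1, 0, u, hmem, _ => by
    cases u with
    | nil => simp
    | cons a _ => exact absurd (hmem a (by simp)) (by omega)
  | k+1, n+1, u, hmem, hlen => by
    rw [W]
    by_cases hn : n ∈ u
    · rcases split_first hn with ⟨s, t, rfl, hs⟩
      have hslen : s.length ≤ k + 1 := by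
        have := hlen; simp at this; omega
      have htlen : t.length ≤ k := by
        have := hlen; simp at this; omega
      have hsub1 : s.Sublist (W (k+1) n) := by
        apply W_univ (k+1) n s _ hslen
        intro x hx
        have := hmem x (by simp [hx])
        have : x ≠ n := fun h => hs (h ▸ hx)
        omega
      have hsub2 : t.Sublist (W k (n+1)) :=
        W_univ k (n+1) t (fun x hx => hmem x (by simp [hx])) htlen
      exact List.Sublist.append hsub1 (List.Sublist.cons₂ n hsub2)
    · have : u.Sublist (W (k+1) n) := by
        apply W_univ (k+1) n u _ (by omega)
        intro x hx
        have := hmem x hx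
        have : x ≠ n := fun h => hn (h ▸ hx)
        omega
      exact this.trans (List.sublist_append_left _ _)
termination_by k n => k + n

lemma cons_sublist_append_cons {x : ℕ} {u A q : List ℕ} (hx : x ∉ A)
    (h : (x :: u).Sublist (A ++ x :: q)) : u.Sublist q := by
  induction A with
  | nil => simpa using h
  | cons b A ih =>
    simp only [List.cons_append] at h
    cases h with
    | cons _ h => exact ih (fun hh => hx (by simp [hh])) h
    | cons_cons _ h => simp at hx

lemma W_distinct : ∀ k n (p : List ℕ) (a : ℕ), (p ++ [a]) <+: W k n →
    ∃ u : List ℕ, u.length ≤ k ∧ u.Sublist (p ++ [a]) ∧ ¬ u.Sublist p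
  | 0, n, p, a, h => by
    have := h.length_le
    simp [W] at this
  | k+1, 0, p, a, h => by
    have := h.length_le
    simp [W] at this
  | k+1, n+1, p, a, h => by
    rw [W] at h
    set A := W (k+1) n with hA
    set B := W k (n+1) with hB
    have hApre : A <+: A ++ n :: B := List.prefix_append _ _
    rcases lt_trichotomy p.length A.length with hlt | heq | hgt
    · -- p ++ [a] is a prefix of A
      have hpre : (p ++ [a]) <+: A :=
        List.prefix_of_prefix_length_le h hApre (by simp; omega)
      exact W_distinct (k+1) n p a hpre
    · -- p = A, a = n
      have hpA : p = A :=
        (List.prefix_of_prefix_length_le ((List.prefix_append p [a]).trans h)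
          hApre (by omega)).eq_of_length heq
      subst hpA
      have han : a = n := by
        rcases h with ⟨r, hr⟩
        have h2 : a = n ∧ r = B := by simpa using hr
        exact h2.1
      refine ⟨[a], by simp, List.sublist_append_right _ _, ?_⟩
      intro hsub
      have : a ∈ A := hsub.subset (by simp)
      exact absurd (W_mem_lt _ _ _ (hA ▸ this)) (by omega)
    · -- p extends past A
      have hpApre : A <+: p :=
        List.prefix_of_prefix_length_le hApre ((List.prefix_append p [a]).trans h) (by omega)
      rcases hpApre with ⟨q, rfl⟩
      cases q with
      | nil => simp at hgt
      | cons c q' =>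
        rcases h with ⟨r, hr⟩
        have h2 : c = n ∧ q' ++ a :: r = B := by simpa using hr
        have hq : (q' ++ [a]) <+: B := ⟨r, by simp [← h2.2]⟩
        obtain ⟨u, hul, hus, hun⟩ := W_distinct k (n+1) q' a hq
        refine ⟨c :: u, by simpa using hul, ?_, ?_⟩
        · have h1 : (c :: u).Sublist (A ++ c :: (q' ++ [a])) :=
            (hus.cons₂ c).trans (List.sublist_append_right _ _)
          simpa using h1
        · intro hsub
          have hcA : c ∉ A := fun hc => absurd (W_mem_lt _ _ _ (hA ▸ hc)) (by omega)
          exact hun (cons_sublist_append_cons hcA hsub)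
termination_by k n => k + n

lemma W_prefix_distinct (k n : ℕ) (q1 q2 : List ℕ) (h1 : q1 <+: W k n) (h2 : q2 <+: W k n)
    (hlen : q1.length < q2.length) :
    ∃ u : List ℕ, u.length ≤ k ∧ u.Sublist q2 ∧ ¬ u.Sublist q1 ∧ ∀ x ∈ u, x < n := by
  have h12 : q1 <+: q2 := List.prefix_of_prefix_length_le h1 h2 (by omega)
  rcases h12 with ⟨r, rfl⟩
  cases r with
  | nil => simp at hlen
  | cons b r' =>
    have hstep : (q1 ++ [b]) <+: q1 ++ b :: r' := ⟨r', by simp⟩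
    have hpre : (q1 ++ [b]) <+: W k n := hstep.trans h2
    obtain ⟨u, hul, hus, hun⟩ := W_distinct k n q1 b hpre
    refine ⟨u, hul, hus.trans hstep.sublist, hun, ?_⟩
    intro x hx
    exact W_mem_lt k n x ((hus.trans hpre.sublist).subset hx)

/-- Lower bound of Problem 1: over any `n`-letter alphabet there is a word of length
`C(k+n, k) - 1` containing all subwords of length at most `k` and whose distinct
prefixes are pairwise non-`k`-equivalent. -/
theorem stmt17 (k n : ℕ) (hk : 1 ≤ k) (hn : 1 ≤ n)
    (α : Type*) [Fintype α] (hcard : Fintype.card α = n) :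
    ∃ w : List α, w.length = Nat.choose (k + n) k - 1 ∧
      subk k w = {u : List α | u.length ≤ k} ∧
      ∀ w1 w2 : List α, w1 <+: w → w2 <+: w → subk k w1 = subk k w2 → w1 = w2 := by
  have hn' : 0 < n := hn
  let e : α ≃ Fin n := Fintype.equivFinOfCardEq hcard
  let f : ℕ → α := fun m => e.symm ⟨m % n, Nat.mod_lt _ hn'⟩
  let g : α → ℕ := fun x => (e x : ℕ)
  have hfg : ∀ x : α, f (g x) = x := by
    intro x
    simp only [f, g, Nat.mod_eq_of_lt (e x).isLt]
    simp
  have hgf : ∀ m, m < n → g (f m) = m := by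
    intro m hm
    simp only [f, g]
    simp [Nat.mod_eq_of_lt hm]
  have hgflist : ∀ l : List ℕ, (∀ x ∈ l, x < n) → (l.map f).map g = l := by
    intro l hl
    rw [List.map_map]
    calc l.map (g ∘ f) = l.map id := List.map_congr_left (fun x hx => hgf x (hl x hx))
    _ = l := List.map_id l
  have hfglist : ∀ l : List α, (l.map g).map f = l := by
    intro l
    rw [List.map_map]
    calc l.map (f ∘ g) = l.map id := List.map_congr_left (fun x _ => hfg x)
    _ = l := List.map_id l
  refine ⟨(W k n).map f, by simp [W_length], ?_, ?_⟩
  · ext u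
    simp only [subk, Set.mem_setOf_eq]
    constructor
    · exact fun h => h.1
    · intro hu
      refine ⟨hu, ?_⟩
      have hglt : ∀ x ∈ u.map g, x < n := by
        intro x hx
        simp only [g, List.mem_map] at hx
        obtain ⟨y, _, rfl⟩ := hx
        exact (e y).isLt
      have hsub : (u.map g).Sublist (W k n) :=
        W_univ k n (u.map g) hglt (by simpa using hu)
      have := hsub.map f
      rwa [hfglist u] at this
  · intro w1 w2 hw1 hw2 hsub
    -- express as mapped prefixes
    have hq : ∀ w : List α, w <+: (W k n).map f →
        ∃ q : List ℕ, q <+: W k n ∧ w = q.map f := by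
      intro w hw
      refine ⟨(W k n).take w.length, List.take_prefix _ _, ?_⟩
      rw [List.map_take]
      exact List.prefix_iff_eq_take.mp hw
    obtain ⟨q1, hq1, rfl⟩ := hq w1 hw1
    obtain ⟨q2, hq2, rfl⟩ := hq w2 hw2
    have hqlt : ∀ q : List ℕ, q <+: W k n → ∀ x ∈ q, x < n := by
      intro q hqp x hx
      exact W_mem_lt k n x (hqp.sublist.subset hx)
    rcases lt_trichotomy q1.length q2.length with hlt | heq | hgt
    · exfalso
      obtain ⟨u, hul, hus, hun, hux⟩ := W_prefix_distinct k n q1 q2 hq1 hq2 hlt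
      have hmem : u.map f ∈ subk k (q2.map f) := ⟨by simpa using hul, hus.map f⟩
      rw [← hsub] at hmem
      have := hmem.2.map g
      rw [hgflist u hux, hgflist q1 (hqlt q1 hq1)] at this
      exact hun this
    · have : q1 = q2 := by
        have e1 := List.prefix_iff_eq_take.mp hq1
        have e2 := List.prefix_iff_eq_take.mp hq2
        rw [e1, e2, heq]
      rw [this]
    · exfalso
      obtain ⟨u, hul, hus, hun, hux⟩ := W_prefix_distinct k n q2 q1 hq2 hq1 hgt
      have hmem : u.map f ∈ subk k (q1.map f) := ⟨by simpa using hul, hus.map f⟩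
      rw [hsub] at hmem
      have := hmem.2.map g
      rw [hgflist u hux, hgflist q2 (hqlt q2 hq2)] at this
      exact hun this
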